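/- The space of inner derivations of the algebra A₃⁴ (basis e₁,e₂,e₃ with e₁∘e₂ = ½e₃, e₂∘e₁ = -½e₃) is 2-dimensional over ℂ. -/

import Mathlib

/-- The 3-dimensional Zinbiel algebra A₃⁴: e₁∘e₂ = ½e₃, e₂∘e₁ = -½e₃. -/
noncomputable def mulA34 : (Fin 3 → ℂ) → (Fin 3 → ℂ) → (Fin 3 → ℂ) :=
  fun u v => ![0, 0, (u 0 * v 1 - u 1 * v 0) / 2]

noncomputable def fA1 : (Fin 3 → ℂ) →ₗ[ℂ] (Fin 3 → ℂ) :=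
  (LinearMap.single ℂ (fun _ : Fin 3 => ℂ) 2).comp (LinearMap.proj 1)

noncomputable def fA2 : (Fin 3 → ℂ) →ₗ[ℂ] (Fin 3 → ℂ) :=
  -((LinearMap.single ℂ (fun _ : Fin 3 => ℂ) 2).comp (LinearMap.proj 0))

lemma fA1_apply (u : Fin 3 → ℂ) (i : Fin 3) : fA1 u i = ![0,0,u 1] i := by
  fin_cases i <;> simp [fA1, Pi.single_apply]

lemma fA2_apply (u : Fin 3 → ℂ) (i : Fin 3) : fA2 u i = ![0,0,-u 0] i := by
  fin_cases i <;> simp [fA2, Pi.single_apply]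

/-- The space of inner derivations of A₃⁴ is 2-dimensional. -/
theorem inner_derivations_A34_dim_two :
    Module.finrank ℂ
      ↥(Submodule.span ℂ
        {f : (Fin 3 → ℂ) →ₗ[ℂ] (Fin 3 → ℂ) |
          ∃ w : Fin 3 → ℂ, ∀ u : Fin 3 → ℂ, f u = mulA34 w u - mulA34 u w}) = 2 := by
  have hspan : Submodule.span ℂ
      {f : (Fin 3 → ℂ) →ₗ[ℂ] (Fin 3 → ℂ) |
        ∃ w : Fin 3 → ℂ, ∀ u : Fin 3 → ℂ, f u = mulA34 w u - mulA34 u w}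
      = Submodule.span ℂ (Set.range ![fA1, fA2]) := by
    apply le_antisymm
    · rw [Submodule.span_le]
      rintro f ⟨w, hw⟩
      have : f = w 0 • fA1 + w 1 • fA2 := by
        refine LinearMap.ext fun u => funext fun i => ?_
        rw [hw u]
        simp only [LinearMap.add_apply, LinearMap.smul_apply, Pi.add_apply, Pi.smul_apply,
          fA1_apply, fA2_apply, mulA34, Pi.sub_apply]
        fin_cases i <;> simp <;> ring
      rw [this]
      exact Submodule.add_mem _
        (Submodule.smul_mem _ _ (Submodule.subset_span ⟨0, rfl⟩))
        (Submodule.smul_mem _ _ (Submodule.subset_span ⟨1, rfl⟩))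
    · rw [Submodule.span_le]
      rintro f ⟨i, rfl⟩
      fin_cases i
      · refine Submodule.subset_span ⟨![1,0,0], fun u => ?_⟩
        funext i
        show fA1 u i = _
        rw [fA1_apply]
        fin_cases i <;> simp [mulA34] <;> ring
      · refine Submodule.subset_span ⟨![0,1,0], fun u => ?_⟩
        funext i
        show fA2 u i = _
        rw [fA2_apply]
        fin_cases i <;> simp [mulA34] <;> ring
  rw [hspan]
  have li : LinearIndependent ℂ ![fA1, fA2] := by
    rw [LinearIndependent.pair_iff]
    intro s t h
    have h1 := congrFun (congrFun (congrArg DFunLike.coe h) ![0,1,0]) 2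
    have h2 := congrFun (congrFun (congrArg DFunLike.coe h) ![1,0,0]) 2
    simp only [LinearMap.add_apply, LinearMap.smul_apply, Pi.add_apply, Pi.smul_apply,
      fA1_apply, fA2_apply, LinearMap.zero_apply, Pi.zero_apply, smul_eq_mul] at h1 h2
    norm_num [Matrix.cons_val_two, Matrix.tail_cons, Matrix.head_cons] at h1 h2
    exact ⟨h1, h2⟩
  rw [finrank_span_eq_card li]
  simp
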